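/- For any x ∈ [0,∞)ⁿ the following are equivalent: (1) x is a boundary equilibrium, i.e. f(x) = 0 and some coordinate of x is zero; (2) for every j ∈ {1,…,m} there is some k ∈ S_j with x_k = 0; (3) for every j ∈ {1,…,m}, θ(x₁)^{b_{1j}} θ(x₂)^{b_{2j}} ⋯ θ(xₙ)^{b_{nj}} = 0. -/

import Mathlib

open Finset

lemma aux_irr_closure {m : ℕ} (A : Matrix (Fin m) (Fin m) ℝ)
    (hAnn : ∀ i j, 0 ≤ A i j) (S : Set (Fin m))
    (hS : ∀ j ∈ S, ∀ i, 0 < A i j → i ∈ S) :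
    ∀ p : ℕ, (∀ i j, 0 ≤ ((1 + A) ^ p) i j) ∧
      (∀ i j, 0 < ((1 + A) ^ p) i j → j ∈ S → i ∈ S) := by
  intro p
  induction p with
  | zero =>
    constructor
    · intro i j
      simp only [pow_zero, Matrix.one_apply]
      split <;> norm_num
    · intro i j h hj
      simp only [pow_zero, Matrix.one_apply] at h
      by_cases hij : i = j
      · exact hij ▸ hj
      · simp [hij] at h
  | succ p ih =>
    have hBnn : ∀ i j, 0 ≤ (1 + A) i j := by
      intro i j
      have : (1 + A) i j = (1 : Matrix (Fin m) (Fin m) ℝ) i j + A i j := rfl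
      rw [this, Matrix.one_apply]
      split <;> [linarith [hAnn i j]; linarith [hAnn i j]]
    have hBcl : ∀ i j, 0 < (1 + A) i j → j ∈ S → i ∈ S := by
      intro i j h hj
      by_cases hij : i = j
      · exact hij ▸ hj
      · have : (1 + A) i j = (1 : Matrix (Fin m) (Fin m) ℝ) i j + A i j := rfl
        rw [this, Matrix.one_apply, if_neg hij, zero_add] at h
        exact hS j hj i h
    constructor
    · intro i j
      rw [pow_succ, Matrix.mul_apply]
      exact Finset.sum_nonneg fun l _ => mul_nonneg (ih.1 i l) (hBnn l j)
    · intro i j h hj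
      rw [pow_succ, Matrix.mul_apply] at h
      have : ∃ l ∈ Finset.univ, (0:ℝ) < ((1 + A) ^ p) i l * (1 + A) l j := by
        by_contra hcon
        push_neg at hcon
        have : ∑ l, ((1 + A) ^ p) i l * (1 + A) l j ≤ 0 :=
          Finset.sum_nonpos fun l _ => hcon l (Finset.mem_univ l)
        linarith
      obtain ⟨l, -, hl⟩ := this
      rcases mul_pos_iff.mp hl with ⟨h1, h2⟩ | ⟨h1, h2⟩
      · exact ih.2 i l h1 (hBcl l j h2 hj)
      · exact absurd h2 (not_lt.mpr (hBnn l j))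

theorem stmt_12
    (n m : ℕ) (hm : 0 < m) (hmn : m ≤ n)
    (θ : ℝ → ℝ)
    (hθlip : LocallyLipschitz θ)
    (hθ0 : θ 0 = 0)
    (hθnn : ∀ y : ℝ, 0 ≤ θ y)
    (hθmono : StrictMonoOn θ (Set.Ici (0:ℝ)))
    (hθonto : ∀ r : ℝ, 0 ≤ r → ∃ y : ℝ, 0 ≤ y ∧ θ y = r)
    (hθint : MeasureTheory.IntegrableOn (fun y => |Real.log (θ y)|) (Set.Ioc (0:ℝ) 1))
    (A : Matrix (Fin m) (Fin m) ℝ)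
    (hAnn : ∀ i j, 0 ≤ A i j)
    (hAirr : ∀ i j, 0 < ((1 + A) ^ (m - 1)) i j)
    (B : Matrix (Fin n) (Fin m) ℝ)
    (hBnn : ∀ k j, 0 ≤ B k j)
    (hBrank : B.rank = m)
    (hBrow : ∀ k, ∃ j, B k j ≠ 0)
    (hBent : ∀ k j, B k j = 0 ∨ 1 ≤ B k j)
    (f : EuclideanSpace ℝ (Fin n) → EuclideanSpace ℝ (Fin n))
    (hf : ∀ x : EuclideanSpace ℝ (Fin n), ∀ k : Fin n,
      f x k = ∑ i : Fin m, ∑ j : Fin m,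
        A i j * (∏ l : Fin n, θ (x l) ^ (B l j)) * (B k i - B k j))
    :
    ∀ x : EuclideanSpace ℝ (Fin n), (∀ k, 0 ≤ x k) →
      (((f x = 0 ∧ ∃ k, x k = 0) ↔ (∀ j : Fin m, ∃ k, 0 < B k j ∧ x k = 0)) ∧
       ((∀ j : Fin m, ∃ k, 0 < B k j ∧ x k = 0) ↔
        (∀ j : Fin m, (∏ l : Fin n, θ (x l) ^ (B l j)) = 0))) := by
  intro x hx
  have hθpos : ∀ k, x k ≠ 0 → 0 < θ (x k) := by
    intro k hk
    have hxk : 0 < x k := lt_of_le_of_ne (hx k) (Ne.symm hk)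
    have := hθmono (Set.mem_Ici.mpr le_rfl) (Set.mem_Ici.mpr (hx k)) hxk
    rwa [hθ0] at this
  have hPnn : ∀ j, 0 ≤ ∏ l, θ (x l) ^ (B l j) :=
    fun j => Finset.prod_nonneg fun l _ => Real.rpow_nonneg (hθnn _) _
  have hP0 : ∀ j, (∏ l, θ (x l) ^ (B l j)) = 0 ↔ ∃ k, 0 < B k j ∧ x k = 0 := by
    intro j
    rw [Finset.prod_eq_zero_iff]
    constructor
    · rintro ⟨l, -, hl⟩
      rw [Real.rpow_eq_zero_iff_of_nonneg (hθnn _)] at hl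
      obtain ⟨hl1, hl2⟩ := hl
      refine ⟨l, lt_of_le_of_ne (hBnn l j) (Ne.symm hl2), ?_⟩
      by_contra hxl
      exact absurd hl1 (ne_of_gt (hθpos l hxl))
    · rintro ⟨k, hk, hxk⟩
      refine ⟨k, Finset.mem_univ k, ?_⟩
      rw [hxk, hθ0, Real.zero_rpow (ne_of_gt hk)]
  have h23 : (∀ j : Fin m, ∃ k, 0 < B k j ∧ x k = 0) ↔
      (∀ j : Fin m, (∏ l, θ (x l) ^ (B l j)) = 0) :=
    forall_congr' fun j => (hP0 j).symm
  refine ⟨⟨?_, ?_⟩, h23⟩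
  · rintro ⟨hfx, k0, hk0⟩ j0
    by_contra hcon
    push_neg at hcon
    set S : Set (Fin m) := {j | ∀ k, 0 < B k j → x k ≠ 0} with hSdef
    have hmemP : ∀ j : Fin m, j ∈ S ↔ 0 < ∏ l, θ (x l) ^ (B l j) := by
      intro j
      constructor
      · intro hj
        rcases (hPnn j).lt_or_eq with h | h
        · exact h
        · obtain ⟨k, hk, hxk⟩ := (hP0 j).mp h.symm
          exact absurd hxk (hj k hk)
      · intro h k hk hxk
        rw [(hP0 j).mpr ⟨k, hk, hxk⟩] at h
        exact lt_irrefl 0 h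
    have hterm_nn : ∀ k : Fin n, x k = 0 → ∀ i' j' : Fin m,
        0 ≤ A i' j' * (∏ l, θ (x l) ^ (B l j')) * (B k i' - B k j') := by
      intro k hxk i' j'
      rcases (hPnn j').lt_or_eq with hP | hP
      · have hj'S : j' ∈ S := (hmemP j').mpr hP
        have hBkj' : B k j' = 0 := by
          by_contra h
          exact hj'S k (lt_of_le_of_ne (hBnn k j') (Ne.symm h)) hxk
        rw [hBkj', sub_zero]
        exact mul_nonneg (mul_nonneg (hAnn i' j') hP.le) (hBnn k i')
      · rw [← hP, mul_zero, zero_mul]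
    have hclos : ∀ j ∈ S, ∀ i, 0 < A i j → i ∈ S := by
      intro j hj i hAij k hBki hxk
      have hfk : (∑ i' : Fin m, ∑ j' : Fin m,
          A i' j' * (∏ l, θ (x l) ^ (B l j')) * (B k i' - B k j')) = 0 := by
        rw [← hf x k, hfx]; rfl
      have hz := (Finset.sum_eq_zero_iff_of_nonneg
        (fun i' _ => Finset.sum_nonneg fun j' _ => hterm_nn k hxk i' j')).mp hfk i
        (Finset.mem_univ i)
      have hz2 := (Finset.sum_eq_zero_iff_of_nonneg
        (fun j' _ => hterm_nn k hxk i j')).mp hz j (Finset.mem_univ j)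
      have hPj : 0 < ∏ l, θ (x l) ^ (B l j) := (hmemP j).mp hj
      have hBkj : B k j = 0 := by
        by_contra h
        exact hj k (lt_of_le_of_ne (hBnn k j) (Ne.symm h)) hxk
      rw [hBkj, sub_zero] at hz2
      exact absurd hz2 (ne_of_gt (mul_pos (mul_pos hAij hPj) hBki))
    have hj0S : j0 ∈ S := by
      intro k hk hxk
      exact hcon k hk hxk
    have hall : ∀ i : Fin m, i ∈ S := fun i =>
      (aux_irr_closure A hAnn S hclos (m - 1)).2 i j0 (hAirr i j0) hj0S
    obtain ⟨j', hj'⟩ := hBrow k0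
    exact hall j' k0 (lt_of_le_of_ne (hBnn k0 j') (Ne.symm hj')) hk0
  · intro h2
    constructor
    · ext k
      show f x k = 0
      rw [hf]
      apply Finset.sum_eq_zero
      intro i _
      apply Finset.sum_eq_zero
      intro j _
      rw [(hP0 j).mpr (h2 j), mul_zero, zero_mul]
    · obtain ⟨k, -, hk⟩ := h2 ⟨0, hm⟩
      exact ⟨k, hk⟩
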